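/- Let γ(x), x ∈ X (X a finite set), be i.i.d. random variables with the Gumbel distribution whose CDF is G(t) = exp(-exp(-(t+c))), where c is the Euler–Mascheroni constant. Then for any function θ : X → ℝ, the random variable max_{x∈X} {θ(x) + γ(x)} is distributed according to the Gumbel distribution shifted by log Z(θ), i.e., its CDF is G(t - log Z(θ)) where Z(θ) = Σ_{x∈X} exp(θ(x)). In particular, E[max_{x∈X} {θ(x) + γ(x)}] = log Z(θ). -/

import Mathlib

open MeasureTheory Real

/-- Density of the zero-mean Gumbel distribution (mode shifted by the
Euler–Mascheroni constant), whose CDF is `exp (-exp (-(t + c)))`. -/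
noncomputable def gumbelPDF (t : ℝ) : ℝ :=
  Real.exp (-(t + Real.eulerMascheroniConstant)) *
    Real.exp (-Real.exp (-(t + Real.eulerMascheroniConstant)))

/-- The zero-mean Gumbel measure on `ℝ`. -/
noncomputable def gumbel : Measure ℝ :=
  MeasureTheory.volume.withDensity fun t => ENNReal.ofReal (gumbelPDF t)

/-- CDF of the zero-mean Gumbel distribution. -/
noncomputable def gumbelCDF (t : ℝ) : ℝ :=
  Real.exp (-Real.exp (-(t + Real.eulerMascheroniConstant)))

namespace GumbelAux

open Set

local notation "c" => Real.eulerMascheroniConstant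

noncomputable def φ (u : ℝ) : ℝ := -Real.log u - c

lemma φ_deriv {a : ℝ} (ha : 0 ≤ a) :
    ∀ u ∈ Ioi a, HasDerivWithinAt φ (-u⁻¹) (Ioi a) u := fun u hu =>
  (((Real.hasDerivAt_log (ne_of_gt (lt_of_le_of_lt ha hu))).neg).sub_const c).hasDerivWithinAt

lemma φ_inj {a : ℝ} (ha : 0 ≤ a) : InjOn φ (Ioi a) := fun u hu v hv h => by
  have hu0 : 0 < u := lt_of_le_of_lt ha hu
  have hv0 : 0 < v := lt_of_le_of_lt ha hv
  have : Real.log u = Real.log v := by unfold φ at h; linarith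
  rw [← Real.exp_log hu0, ← Real.exp_log hv0, this]

lemma φ_img_zero : φ '' Ioi 0 = univ := by
  ext y
  simp only [mem_univ, iff_true, mem_image]
  exact ⟨Real.exp (-(y + c)), Real.exp_pos _, by
    unfold φ; rw [Real.log_exp]; ring⟩

lemma φ_img (t : ℝ) : φ '' Ioi (Real.exp (-(t + c))) = Iio t := by
  ext y
  constructor
  · rintro ⟨u, hu, rfl⟩
    have hu0 : 0 < u := lt_trans (Real.exp_pos _) hu
    have := (Real.lt_log_iff_exp_lt hu0).2 hu
    unfold φ
    simp only [mem_Iio]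
    linarith
  · intro hy
    exact ⟨Real.exp (-(y + c)), Real.exp_lt_exp.2 (by simp only [mem_Iio] at hy; linarith), by
      unfold φ; rw [Real.log_exp]; ring⟩

lemma cov {a : ℝ} (ha : 0 ≤ a) (g : ℝ → ℝ) :
    ∫ x in φ '' Ioi a, g x = ∫ u in Ioi a, u⁻¹ * g (φ u) := by
  rw [integral_image_eq_integral_abs_deriv_smul measurableSet_Ioi (φ_deriv ha) (φ_inj ha)]
  refine setIntegral_congr_fun measurableSet_Ioi fun u hu => ?_
  have hu0 : 0 < u := lt_of_le_of_lt ha hu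
  rw [abs_neg, abs_inv, abs_of_pos hu0, smul_eq_mul]

lemma cov_int {a : ℝ} (ha : 0 ≤ a) (g : ℝ → ℝ) :
    IntegrableOn g (φ '' Ioi a) ↔ IntegrableOn (fun u => u⁻¹ * g (φ u)) (Ioi a) := by
  rw [integrableOn_image_iff_integrableOn_abs_deriv_smul measurableSet_Ioi (φ_deriv ha)
    (φ_inj ha)]
  refine integrableOn_congr_fun (fun u hu => ?_) measurableSet_Ioi
  have hu0 : 0 < u := lt_of_le_of_lt ha hu
  rw [abs_neg, abs_inv, abs_of_pos hu0, smul_eq_mul]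

lemma pdf_φ {u : ℝ} (hu : 0 < u) : gumbelPDF (φ u) = u * Real.exp (-u) := by
  unfold gumbelPDF φ
  rw [show -(-Real.log u - c + c) = Real.log u by ring, Real.exp_log hu]

lemma inv_pdf_φ {u : ℝ} (hu : 0 < u) : u⁻¹ * gumbelPDF (φ u) = Real.exp (-u) := by
  rw [pdf_φ hu, ← mul_assoc, inv_mul_cancel₀ hu.ne', one_mul]

lemma integral_log_mul_exp_neg :
    ∫ t in Ioi (0:ℝ), Real.log t * Real.exp (-t) = -c := by
  have h1 := Complex.hasDerivAt_GammaIntegral (s := 1) (by simp)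
  have heq : (∫ t : ℝ in Ioi 0, (t:ℂ) ^ ((1:ℂ) - 1) * (Real.log t * Real.exp (-t)))
      = ((∫ t in Ioi (0:ℝ), Real.log t * Real.exp (-t) : ℝ) : ℂ) := by
    calc (∫ t : ℝ in Ioi 0, (t:ℂ) ^ ((1:ℂ) - 1) * (Real.log t * Real.exp (-t)))
        = ∫ t : ℝ in Ioi 0, ((Real.log t * Real.exp (-t) : ℝ) : ℂ) := by
          refine setIntegral_congr_fun measurableSet_Ioi fun t ht => ?_
          push_cast
          simp
      _ = _ := integral_ofReal
  rw [heq] at h1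
  have h2 : HasDerivAt Complex.Gamma
      ((∫ t in Ioi (0:ℝ), Real.log t * Real.exp (-t) : ℝ) : ℂ) 1 := by
    refine h1.congr_of_eventuallyEq ?_
    filter_upwards [IsOpen.mem_nhds (isOpen_lt continuous_const Complex.continuous_re)
      (show (0:ℝ) < (1:ℂ).re by norm_num)] with z hz
    exact Complex.Gamma_eq_integral hz
  have h3 : HasDerivAt (fun x : ℝ => Complex.Gamma x)
      ((∫ t in Ioi (0:ℝ), Real.log t * Real.exp (-t) : ℝ) : ℂ) 1 := by
    simpa using h2.comp_ofReal
  have h4 : HasDerivAt (fun x : ℝ => ((Real.Gamma x : ℂ))) ((-c : ℝ) : ℂ) 1 :=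
    Real.hasDerivAt_Gamma_one.ofReal_comp
  have h5 : HasDerivAt (fun x : ℝ => Complex.Gamma x) ((-c : ℝ) : ℂ) 1 := by
    refine h4.congr_of_eventuallyEq ?_
    filter_upwards with x using Complex.Gamma_ofReal x
  exact_mod_cast h3.unique h5

lemma integrableOn_log_mul_exp_neg :
    IntegrableOn (fun u => Real.log u * Real.exp (-u)) (Ioi (0:ℝ)) := by
  have hmeas : AEStronglyMeasurable (fun u => Real.log u * Real.exp (-u))
      (volume : Measure ℝ) :=
    (Real.measurable_log.mul (Real.continuous_exp.comp continuous_neg).measurable)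
      |>.aestronglyMeasurable
  rw [← Ioc_union_Ioi_eq_Ioi (zero_le_one : (0:ℝ) ≤ 1), integrableOn_union]
  constructor
  · -- on Ioc 0 1 : bound by 2 * u ^ (-1/2 : ℝ)
    have hint : IntegrableOn (fun u : ℝ => 2 * u ^ (-1/2 : ℝ)) (Ioc 0 1) := by
      refine Integrable.const_mul ?_ 2
      exact (intervalIntegral.intervalIntegrable_rpow' (by norm_num)).1
    refine Integrable.mono hint hmeas.restrict ?_
    filter_upwards [ae_restrict_mem measurableSet_Ioc] with u hu
    have hu0 : 0 < u := hu.1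
    have hb : |Real.log u| ≤ 2 * u ^ (-1/2 : ℝ) := by
      rw [abs_of_nonpos (Real.log_nonpos hu0.le hu.2), ← Real.log_inv]
      have := Real.log_le_rpow_div (inv_nonneg.2 hu0.le) (by norm_num : (0:ℝ) < 1/2)
      calc Real.log u⁻¹ ≤ u⁻¹ ^ (1/2 : ℝ) / (1/2) := this
        _ = 2 * u ^ (-1/2 : ℝ) := by
            rw [Real.inv_rpow hu0.le, ← Real.rpow_neg hu0.le]
            ring_nf
    calc ‖Real.log u * Real.exp (-u)‖ = |Real.log u| * Real.exp (-u) := by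
          rw [norm_mul, Real.norm_eq_abs, Real.norm_eq_abs, abs_of_pos (Real.exp_pos _)]
      _ ≤ |Real.log u| * 1 := by
          exact mul_le_mul_of_nonneg_left (Real.exp_le_one_iff.2 (by linarith)) (abs_nonneg _)
      _ ≤ 2 * u ^ (-1/2 : ℝ) := by rw [mul_one]; exact hb
      _ ≤ ‖2 * u ^ (-1/2 : ℝ)‖ := le_abs_self _
  · -- on Ioi 1 : bound by u * exp (-u)
    have hint : IntegrableOn (fun u : ℝ => Real.exp (-u) * u ^ ((2:ℝ) - 1)) (Ioi 1) :=
      (Real.GammaIntegral_convergent (by norm_num : (0:ℝ) < 2)).mono_set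
        (Ioi_subset_Ioi zero_le_one)
    refine Integrable.mono hint hmeas.restrict ?_
    filter_upwards [ae_restrict_mem measurableSet_Ioi] with u hu
    have hu1 : (1:ℝ) ≤ u := le_of_lt hu
    have hu0 : 0 < u := lt_of_lt_of_le zero_lt_one hu1
    have hlog : |Real.log u| ≤ u := by
      rw [abs_of_nonneg (Real.log_nonneg hu1)]
      exact (Real.log_le_sub_one_of_pos hu0).trans (by linarith)
    calc ‖Real.log u * Real.exp (-u)‖ = |Real.log u| * Real.exp (-u) := by
          rw [norm_mul, Real.norm_eq_abs, Real.norm_eq_abs, abs_of_pos (Real.exp_pos _)]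
      _ ≤ u * Real.exp (-u) := mul_le_mul_of_nonneg_right hlog (Real.exp_pos _).le
      _ = Real.exp (-u) * u ^ ((2:ℝ) - 1) := by
          rw [show ((2:ℝ) - 1) = 1 by norm_num, Real.rpow_one]; ring
      _ ≤ ‖Real.exp (-u) * u ^ ((2:ℝ) - 1)‖ := le_abs_self _


lemma gumbelPDF_nonneg (t : ℝ) : 0 ≤ gumbelPDF t :=
  mul_nonneg (Real.exp_pos _).le (Real.exp_pos _).le

lemma continuous_gumbelPDF : Continuous gumbelPDF := by
  unfold gumbelPDF; fun_prop

lemma integrable_gumbelPDF : Integrable gumbelPDF := by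
  rw [← integrableOn_univ, ← φ_img_zero, cov_int le_rfl]
  have : IntegrableOn (fun u : ℝ => Real.exp (-u)) (Ioi 0) := exp_neg_integrableOn_Ioi 0 zero_lt_one |>.congr_fun (fun u _ => by simp only [neg_one_mul]) measurableSet_Ioi
  refine this.congr_fun (fun u hu => ?_) measurableSet_Ioi
  exact (inv_pdf_φ hu).symm

lemma integral_gumbelPDF : ∫ x, gumbelPDF x = 1 := by
  rw [← setIntegral_univ, ← φ_img_zero, cov le_rfl]
  rw [setIntegral_congr_fun measurableSet_Ioi fun u (hu : (0:ℝ) < u) => inv_pdf_φ hu]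
  exact integral_exp_neg_Ioi_zero

lemma setIntegral_gumbelPDF (t : ℝ) : ∫ x in Iic t, gumbelPDF x = gumbelCDF t := by
  rw [← setIntegral_congr_set (Iio_ae_eq_Iic (a := t)), ← φ_img t,
    cov (Real.exp_pos _).le,
    setIntegral_congr_fun measurableSet_Ioi
      (fun u (hu : Real.exp (-(t + c)) < u) => inv_pdf_φ ((Real.exp_pos _).trans hu)),
    integral_exp_neg_Ioi]
  rfl

lemma integrable_mul_gumbelPDF : Integrable (fun x => x * gumbelPDF x) := by
  rw [← integrableOn_univ, ← φ_img_zero, cov_int le_rfl]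
  have h1 : IntegrableOn (fun u : ℝ => -(Real.log u * Real.exp (-u)) - c * Real.exp (-u))
      (Ioi 0) := by
    refine (integrableOn_log_mul_exp_neg.neg).sub ?_
    exact ((exp_neg_integrableOn_Ioi 0 zero_lt_one).congr_fun
      (fun u _ => by rw [neg_one_mul]) measurableSet_Ioi).const_mul c
  refine h1.congr_fun (fun u hu => ?_) measurableSet_Ioi
  have hu : (0:ℝ) < u := hu
  have h2 : u⁻¹ * (φ u * gumbelPDF (φ u))
      = -(Real.log u * Real.exp (-u)) - c * Real.exp (-u) := by
    rw [show u⁻¹ * (φ u * gumbelPDF (φ u)) = φ u * (u⁻¹ * gumbelPDF (φ u)) by ring,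
      inv_pdf_φ hu]
    unfold φ
    ring
  exact h2.symm

lemma integral_mul_gumbelPDF : ∫ x, x * gumbelPDF x = 0 := by
  rw [← setIntegral_univ, ← φ_img_zero, cov le_rfl]
  have heq : ∫ u in Ioi (0:ℝ), u⁻¹ * (φ u * gumbelPDF (φ u))
      = ∫ u in Ioi (0:ℝ), (-(Real.log u * Real.exp (-u)) - c * Real.exp (-u)) := by
    refine setIntegral_congr_fun measurableSet_Ioi fun u (hu : (0:ℝ) < u) => ?_
    rw [show u⁻¹ * (φ u * gumbelPDF (φ u)) = φ u * (u⁻¹ * gumbelPDF (φ u)) by ring,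
      inv_pdf_φ hu]
    unfold φ
    ring
  have hg : IntegrableOn (fun u : ℝ => c * Real.exp (-u)) (Ioi 0) :=
    ((exp_neg_integrableOn_Ioi 0 zero_lt_one).congr_fun
      (fun u _ => by rw [neg_one_mul]) measurableSet_Ioi).const_mul c
  have hf : IntegrableOn (fun u : ℝ => -(Real.log u * Real.exp (-u))) (Ioi 0) :=
    integrableOn_log_mul_exp_neg.neg
  have hsub : ∫ u in Ioi (0:ℝ), (-(Real.log u * Real.exp (-u)) - c * Real.exp (-u))
      = (∫ u in Ioi (0:ℝ), -(Real.log u * Real.exp (-u)))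
        - ∫ u in Ioi (0:ℝ), c * Real.exp (-u) := integral_sub hf hg
  rw [heq, hsub, integral_neg, integral_log_mul_exp_neg, integral_const_mul,
    integral_exp_neg_Ioi_zero]
  ring

lemma gumbel_apply {s : Set ℝ} (hs : MeasurableSet s) :
    gumbel s = ENNReal.ofReal (∫ x in s, gumbelPDF x) := by
  rw [gumbel, withDensity_apply _ hs,
    ← ofReal_integral_eq_lintegral_ofReal integrable_gumbelPDF.integrableOn
      (Filter.Eventually.of_forall fun x => gumbelPDF_nonneg x)]

instance : IsProbabilityMeasure gumbel := by
  constructor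
  rw [gumbel_apply MeasurableSet.univ, setIntegral_univ, integral_gumbelPDF,
    ENNReal.ofReal_one]

lemma gumbel_Iic (t : ℝ) : gumbel (Iic t) = ENNReal.ofReal (gumbelCDF t) := by
  rw [gumbel_apply measurableSet_Iic, setIntegral_gumbelPDF]

lemma integrable_id_gumbel : Integrable (fun x => x) gumbel := by
  have hm : Measurable fun t => ENNReal.ofReal (gumbelPDF t) :=
    continuous_gumbelPDF.measurable.ennreal_ofReal
  rw [gumbel, integrable_withDensity_iff hm (Filter.Eventually.of_forall fun x =>
    ENNReal.ofReal_lt_top)]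
  refine integrable_mul_gumbelPDF.congr ?_
  filter_upwards with x
  rw [ENNReal.toReal_ofReal (gumbelPDF_nonneg x)]

lemma integral_id_gumbel : ∫ x, x ∂gumbel = 0 := by
  have hm : Measurable fun t => (gumbelPDF t).toNNReal :=
    continuous_gumbelPDF.measurable.real_toNNReal
  have : gumbel = volume.withDensity fun t => ((gumbelPDF t).toNNReal : ENNReal) := rfl
  rw [this, integral_withDensity_eq_integral_smul hm]
  rw [← integral_mul_gumbelPDF]
  congr 1
  ext x
  rw [NNReal.smul_def, smul_eq_mul, Real.coe_toNNReal _ (gumbelPDF_nonneg x), mul_comm]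

end GumbelAux

open GumbelAux

/-- Max-stability of Gumbel perturbations: the max of `θ x + γ x` over a finite set,
with i.i.d. zero-mean Gumbel `γ x`, is Gumbel distributed shifted by `log Z(θ)`,
and in particular its expectation equals `log Z(θ)`. -/
theorem stmt_0 {X : Type} [Fintype X] [Nonempty X] (θ : X → ℝ) :
    (∀ t : ℝ,
      (Measure.pi fun _ : X => gumbel)
          {γ : X → ℝ | (Finset.univ.sup' Finset.univ_nonempty fun x => θ x + γ x) ≤ t}
        = ENNReal.ofReal (gumbelCDF (t - Real.log (∑ x : X, Real.exp (θ x))))) ∧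
    (∫ γ : X → ℝ, (Finset.univ.sup' Finset.univ_nonempty fun x => θ x + γ x)
        ∂(Measure.pi fun _ : X => gumbel))
      = Real.log (∑ x : X, Real.exp (θ x)) := by
  set c := Real.eulerMascheroniConstant with hc
  set Z := ∑ x : X, Real.exp (θ x) with hZdef
  have hZ : 0 < Z := Finset.sum_pos (fun x _ => Real.exp_pos _) Finset.univ_nonempty
  set m := Real.log Z with hm
  set F : (X → ℝ) → ℝ :=
    fun γ => Finset.univ.sup' Finset.univ_nonempty fun x => θ x + γ x with hF
  have hFc : Continuous F := by
    rw [continuous_iff_continuousAt]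
    intro γ
    exact ContinuousAt.finset_sup'_apply Finset.univ_nonempty
      (fun x _ => (continuous_const.add (continuous_apply x)).continuousAt)
  have hcdf : ∀ t : ℝ, (Measure.pi fun _ : X => gumbel) {γ : X → ℝ | F γ ≤ t}
      = ENNReal.ofReal (gumbelCDF (t - m)) := by
    intro t
    have hset : {γ : X → ℝ | F γ ≤ t} = Set.univ.pi fun x => Set.Iic (t - θ x) := by
      ext γ
      simp only [hF, Set.mem_setOf_eq, Finset.sup'_le_iff, Finset.mem_univ, true_implies,
        Set.mem_pi, Set.mem_univ, Set.mem_Iic]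
      exact forall_congr' fun x => by constructor <;> intro h <;> linarith
    rw [hset, Measure.pi_pi]
    simp_rw [gumbel_Iic]
    have hnn : ∀ x ∈ (Finset.univ : Finset X), 0 ≤ gumbelCDF (t - θ x) :=
      fun x _ => (Real.exp_pos _).le
    rw [← ENNReal.ofReal_prod_of_nonneg hnn]
    congr 1
    unfold gumbelCDF
    rw [← Real.exp_sum]
    congr 1
    have hL : ∑ x : X, -Real.exp (-(t - θ x + c)) = -(Real.exp (-(t + c)) * Z) := by
      rw [Finset.sum_neg_distrib]
      congr 1
      rw [hZdef, Finset.mul_sum]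
      refine Finset.sum_congr rfl fun x _ => ?_
      rw [← Real.exp_add]
      ring_nf
    rw [hL, show -(t - m + c) = -(t + c) + m by ring, Real.exp_add, hm, Real.exp_log hZ]
  refine ⟨hcdf, ?_⟩
  have hmap : Measure.map F (Measure.pi fun _ : X => gumbel)
      = Measure.map (· + m) gumbel := by
    have h1 : IsProbabilityMeasure (Measure.map F (Measure.pi fun _ : X => gumbel)) :=
      Measure.isProbabilityMeasure_map hFc.measurable.aemeasurable
    have h2 : IsProbabilityMeasure (Measure.map (· + m) gumbel) :=
      Measure.isProbabilityMeasure_map (measurable_add_const m).aemeasurable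
    refine Measure.ext_of_Iic _ _ fun a => ?_
    rw [Measure.map_apply hFc.measurable measurableSet_Iic,
      Measure.map_apply (measurable_add_const m) measurableSet_Iic]
    have hpre : (· + m) ⁻¹' Set.Iic a = Set.Iic (a - m) := by
      ext x
      simp [le_sub_iff_add_le]
    have hpre2 : F ⁻¹' Set.Iic a = {γ : X → ℝ | F γ ≤ a} := rfl
    rw [hpre, hpre2, hcdf a, gumbel_Iic]
  calc ∫ γ : X → ℝ, F γ ∂(Measure.pi fun _ : X => gumbel)
      = ∫ x, x ∂(Measure.map F (Measure.pi fun _ : X => gumbel)) :=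
        (integral_map hFc.measurable.aemeasurable aestronglyMeasurable_id).symm
    _ = ∫ x, x ∂(Measure.map (· + m) gumbel) := by rw [hmap]
    _ = ∫ x, (x + m) ∂gumbel :=
        integral_map (measurable_add_const m).aemeasurable aestronglyMeasurable_id
    _ = (∫ x, x ∂gumbel) + ∫ _, m ∂gumbel :=
        integral_add integrable_id_gumbel (integrable_const m)
    _ = m := by
        rw [integral_id_gumbel, integral_const]
        simp
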